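/- Let G be a group. If the reduced group C*-algebra C*_r(G) has the Powers property (for every finite S ⊆ G∖{1} and ε > 0 there are n and h₁,…,hₙ with ‖(1/n)∑ⱼ w₂(hⱼ g hⱼ⁻¹)‖ < ε for all g ∈ S), then for every p ∈ (1,∞) the algebra F^p_r(G) ⊆ B(ℓ^p(G)) has the Powers property with respect to the left regular representation w_p. -/

import Mathlib

open scoped ENNReal

section PowersAux2

variable {G : Type*} [Group G]

-- copies of part1 theorems assumed; for compile test, include them via part1 content




theorem avg_apply {p : ℝ≥0∞} [Fact (1 ≤ p)]
    (Wp : G → (lp (fun _ : G => ℂ) p →L[ℂ] lp (fun _ : G => ℂ) p))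
    (hWp : ∀ (g : G) (ξ : lp (fun _ : G => ℂ) p) (h : G), (Wp g ξ) h = ξ (g⁻¹ * h))
    {n : ℕ} (c : Fin n → G) (ξ : lp (fun _ : G => ℂ) p) (x : G) :
    (((n : ℝ)⁻¹ • ∑ j : Fin n, Wp (c j)) ξ) x
      = (n : ℝ)⁻¹ • ∑ j : Fin n, ξ ((c j)⁻¹ * x) := by
  rw [ContinuousLinearMap.smul_apply, lp.coeFn_smul, Pi.smul_apply,
    ContinuousLinearMap.sum_apply, lp.coeFn_sum, Finset.sum_apply]
  congr 1
  exact Finset.sum_congr rfl fun j _ => hWp (c j) ξ x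

theorem norm_avg_apply_le {p : ℝ≥0∞} [Fact (1 ≤ p)]
    (Wp : G → (lp (fun _ : G => ℂ) p →L[ℂ] lp (fun _ : G => ℂ) p))
    (hWp : ∀ (g : G) (ξ : lp (fun _ : G => ℂ) p) (h : G), (Wp g ξ) h = ξ (g⁻¹ * h))
    {n : ℕ} (c : Fin n → G) (ξ : lp (fun _ : G => ℂ) p) (x : G) :
    ‖(((n : ℝ)⁻¹ • ∑ j : Fin n, Wp (c j)) ξ) x‖
      ≤ (n : ℝ)⁻¹ * ∑ j : Fin n, ‖ξ ((c j)⁻¹ * x)‖ := by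
  rw [avg_apply Wp hWp c ξ x, norm_smul, Real.norm_eq_abs,
    abs_of_nonneg (by positivity : (0:ℝ) ≤ (n : ℝ)⁻¹)]
  gcongr
  exact norm_sum_le _ _

theorem avg_apply_real
    (W2 : G → (lp (fun _ : G => ℂ) 2 →L[ℂ] lp (fun _ : G => ℂ) 2))
    (hW2 : ∀ (g : G) (ξ : lp (fun _ : G => ℂ) 2) (h : G), (W2 g ξ) h = ξ (g⁻¹ * h))
    {n : ℕ} (c : Fin n → G) (f : G → ℝ) (hf : ∀ x, 0 ≤ f x)
    (hmem : Memℓp (fun x : G => ((f x : ℝ) : ℂ)) 2) (x : G) :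
    ‖(((n : ℝ)⁻¹ • ∑ j : Fin n, W2 (c j)) (⟨fun x => ((f x : ℝ) : ℂ), hmem⟩ : lp (fun _ : G => ℂ) 2)) x‖
      = (n : ℝ)⁻¹ * ∑ j : Fin n, f ((c j)⁻¹ * x) := by
  rw [avg_apply W2 hW2 c _ x]
  have hcoe : ∀ y : G, ((⟨fun x => ((f x : ℝ) : ℂ), hmem⟩ : lp (fun _ : G => ℂ) 2) : ∀ _ : G, ℂ) y
      = ((f y : ℝ) : ℂ) := fun y => rfl
  simp only [hcoe]
  rw [← Complex.ofReal_sum]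
  have : (n : ℝ)⁻¹ • ((∑ j : Fin n, f ((c j)⁻¹ * x) : ℝ) : ℂ)
      = (((n : ℝ)⁻¹ * ∑ j : Fin n, f ((c j)⁻¹ * x) : ℝ) : ℂ) := by
    rw [Complex.real_smul]
    push_cast
    ring
  rw [this, Complex.norm_real, Real.norm_eq_abs, abs_of_nonneg]
  exact mul_nonneg (by positivity) (Finset.sum_nonneg fun j _ => hf _)



set_option maxHeartbeats 1000000 in
theorem key_bound {p : ℝ≥0∞} [Fact (1 ≤ p)] (hq1 : 1 < p.toReal)
    (Wp : G → (lp (fun _ : G => ℂ) p →L[ℂ] lp (fun _ : G => ℂ) p))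
    (hWp : ∀ (g : G) (ξ : lp (fun _ : G => ℂ) p) (h : G), (Wp g ξ) h = ξ (g⁻¹ * h))
    (W2 : G → (lp (fun _ : G => ℂ) 2 →L[ℂ] lp (fun _ : G => ℂ) 2))
    (hW2 : ∀ (g : G) (ξ : lp (fun _ : G => ℂ) 2) (h : G), (W2 g ξ) h = ξ (g⁻¹ * h))
    {n : ℕ} (hn : 0 < n) (c : Fin n → G) :
    ‖(n : ℝ)⁻¹ • ∑ j : Fin n, Wp (c j)‖
      ≤ ‖(n : ℝ)⁻¹ • ∑ j : Fin n, W2 (c j)‖ ^ (2 * min 1 (p.toReal - 1) / p.toReal) := by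
  have h2r : ((2 : ℝ≥0∞)).toReal = (2 : ℝ) := by simp
  have h2rpos : (0 : ℝ) < ((2 : ℝ≥0∞)).toReal := by rw [h2r]; norm_num
  set q : ℝ := p.toReal with hqdef
  have hq0 : (0 : ℝ) < q := by linarith
  set T2 := (n : ℝ)⁻¹ • ∑ j : Fin n, W2 (c j) with hT2def
  set Tp := (n : ℝ)⁻¹ • ∑ j : Fin n, Wp (c j) with hTpdef
  set C : ℝ := ‖T2‖ with hCdef
  have hC0 : (0 : ℝ) ≤ C := norm_nonneg _
  set m : ℝ := min 1 (q - 1) with hmdef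
  have hm0 : (0 : ℝ) < m := lt_min one_pos (by linarith)
  have hnne : ((n : ℝ)) ≠ 0 := Nat.cast_ne_zero.2 hn.ne'
  apply ContinuousLinearMap.opNorm_le_bound _ (Real.rpow_nonneg hC0 _)
  intro ξ
  -- the key power inequality
  suffices key : ‖Tp ξ‖ ^ q ≤ C ^ (2 * m) * ‖ξ‖ ^ q by
    have h1 := Real.rpow_le_rpow (Real.rpow_nonneg (norm_nonneg (Tp ξ)) q) key
      (inv_nonneg.2 hq0.le)
    rw [Real.rpow_rpow_inv (norm_nonneg _) hq0.ne',
      Real.mul_rpow (Real.rpow_nonneg hC0 _) (Real.rpow_nonneg (norm_nonneg _) _),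
      Real.rpow_rpow_inv (norm_nonneg _) hq0.ne', ← Real.rpow_mul hC0] at h1
    rw [div_eq_mul_inv]
    exact h1
  -- the auxiliary ℓ² vector
  have hsumξq : Summable (fun x : G => ‖ξ x‖ ^ q) := (lp.memℓp ξ).summable hq0
  have hentry : ∀ x : G, ‖((‖ξ x‖ ^ (q / 2) : ℝ) : ℂ)‖ ^ ((2 : ℝ≥0∞)).toReal = ‖ξ x‖ ^ q := by
    intro x
    rw [h2r, Complex.norm_real, Real.norm_eq_abs,
      abs_of_nonneg (Real.rpow_nonneg (norm_nonneg _) _), ← Real.rpow_mul (norm_nonneg _),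
      div_mul_cancel₀ _ (two_ne_zero)]
  have hmemη : Memℓp (fun x : G => ((‖ξ x‖ ^ (q / 2) : ℝ) : ℂ)) 2 := by
    apply memℓp_gen
    exact Summable.congr hsumξq (fun x => (hentry x).symm)
  set η : lp (fun _ : G => ℂ) 2 := ⟨fun x => ((‖ξ x‖ ^ (q / 2) : ℝ) : ℂ), hmemη⟩ with hηdef
  have hB : ∀ x : G, ‖(T2 η) x‖
      = (n : ℝ)⁻¹ * ∑ j : Fin n, ‖ξ ((c j)⁻¹ * x)‖ ^ (q / 2) :=
    avg_apply_real W2 hW2 c (fun x => ‖ξ x‖ ^ (q / 2))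
      (fun x => Real.rpow_nonneg (norm_nonneg _) _) hmemη
  have hηnorm : ‖η‖ ^ (2 : ℝ) = ‖ξ‖ ^ q := by
    have h := lp.norm_rpow_eq_tsum h2rpos η
    rw [h2r] at h
    rw [h, lp.norm_rpow_eq_tsum hq0 ξ]
    refine tsum_congr fun x => ?_
    have := hentry x
    rw [h2r] at this
    exact this
  have hsummB2 : Summable (fun x : G => ‖(T2 η) x‖ ^ (2 : ℝ)) := by
    have := (lp.memℓp (T2 η)).summable h2rpos
    rwa [h2r] at this
  have hT2norm : ∑' x : G, ‖(T2 η) x‖ ^ (2 : ℝ) = ‖T2 η‖ ^ (2 : ℝ) := by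
    have := lp.norm_rpow_eq_tsum h2rpos (T2 η)
    rw [h2r] at this
    exact this.symm
  have hT2b : ‖T2 η‖ ^ (2 : ℝ) ≤ C ^ (2 : ℝ) * ‖ξ‖ ^ q := by
    calc ‖T2 η‖ ^ (2 : ℝ) ≤ (C * ‖η‖) ^ (2 : ℝ) :=
          Real.rpow_le_rpow (norm_nonneg _) (T2.le_opNorm η) (by norm_num)
      _ = C ^ (2 : ℝ) * ‖η‖ ^ (2 : ℝ) := Real.mul_rpow hC0 (norm_nonneg _)
      _ = C ^ (2 : ℝ) * ‖ξ‖ ^ q := by rw [hηnorm]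
  have hTpsum : ‖Tp ξ‖ ^ q = ∑' x : G, ‖(Tp ξ) x‖ ^ q := lp.norm_rpow_eq_tsum hq0 _
  have hsummA : Summable (fun x : G => ‖(Tp ξ) x‖ ^ q) := (lp.memℓp (Tp ξ)).summable hq0
  have hwsum : ∑ _j : Fin n, (n : ℝ)⁻¹ = 1 := by
    rw [Finset.sum_const, Finset.card_univ, Fintype.card_fin, nsmul_eq_mul,
      mul_inv_cancel₀ hnne]
  rcases le_or_gt 2 q with hq2 | hq2
  · -- case 2 ≤ q
    have hmeq : m = 1 := min_eq_left (by linarith)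
    have hpointwise : ∀ x : G, ‖(Tp ξ) x‖ ^ q ≤ ‖(T2 η) x‖ ^ (2 : ℝ) := by
      intro x
      have h1 : ‖(Tp ξ) x‖ ≤ ∑ j : Fin n, (n : ℝ)⁻¹ * ‖ξ ((c j)⁻¹ * x)‖ :=
        (norm_avg_apply_le Wp hWp c ξ x).trans_eq (Finset.mul_sum _ _ _)
      have h2' := Real.inner_le_weight_mul_Lp_of_nonneg (Finset.univ : Finset (Fin n))
        (p := q / 2) (by linarith) (fun _ => (n : ℝ)⁻¹)
        (fun j => ‖ξ ((c j)⁻¹ * x)‖) (fun _ => by positivity) (fun j => norm_nonneg _)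
      beta_reduce at h2'
      have hs : (∑ i : Fin n, (n : ℝ)⁻¹ * ‖ξ ((c i)⁻¹ * x)‖ ^ (q / 2)) = ‖(T2 η) x‖ := by
        rw [← Finset.mul_sum]; exact (hB x).symm
      rw [hwsum, Real.one_rpow, one_mul, hs] at h2'
      have h3 : ‖(Tp ξ) x‖ ≤ ‖(T2 η) x‖ ^ ((q / 2)⁻¹) := h1.trans h2'
      have h4 := Real.rpow_le_rpow (norm_nonneg _) h3 hq0.le
      rwa [← Real.rpow_mul (norm_nonneg _),
        show (q / 2)⁻¹ * q = 2 by field_simp] at h4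
    calc ‖Tp ξ‖ ^ q = ∑' x : G, ‖(Tp ξ) x‖ ^ q := hTpsum
      _ ≤ ∑' x : G, ‖(T2 η) x‖ ^ (2 : ℝ) := Summable.tsum_le_tsum hpointwise hsummA hsummB2
      _ = ‖T2 η‖ ^ (2 : ℝ) := hT2norm
      _ ≤ C ^ (2 : ℝ) * ‖ξ‖ ^ q := hT2b
      _ = C ^ (2 * m) * ‖ξ‖ ^ q := by rw [hmeq]; norm_num
  · -- case q < 2
    have hmeq : m = q - 1 := min_eq_right (by linarith)
    have h2q : (0 : ℝ) < 2 - q := by linarith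
    have hq1' : (0 : ℝ) < q - 1 := by linarith
    set F : G → ℝ := fun x => (n : ℝ)⁻¹ * ∑ j : Fin n, ‖ξ ((c j)⁻¹ * x)‖ ^ q with hFdef
    have hF0 : ∀ x, 0 ≤ F x := fun x =>
      mul_nonneg (by positivity) (Finset.sum_nonneg fun j _ => Real.rpow_nonneg (norm_nonneg _) _)
    have hsummj : ∀ j : Fin n, Summable (fun x : G => ‖ξ ((c j)⁻¹ * x)‖ ^ q) := by
      intro j
      have := ((Equiv.mulLeft ((c j)⁻¹)).summable_iff (f := fun y : G => ‖ξ y‖ ^ q)).2 hsumξq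
      simpa [Function.comp_def, Equiv.coe_mulLeft] using this
    have hFsum : Summable F := by
      apply Summable.mul_left
      exact summable_sum (fun j _ => hsummj j)
    have hFts : ∑' x : G, F x = ‖ξ‖ ^ q := by
      rw [hFdef]
      rw [tsum_mul_left, Summable.tsum_finsetSum (fun j _ => hsummj j)]
      have hj : ∀ j : Fin n, ∑' x : G, ‖ξ ((c j)⁻¹ * x)‖ ^ q = ‖ξ‖ ^ q := by
        intro j
        have := (Equiv.mulLeft ((c j)⁻¹)).tsum_eq (fun y : G => ‖ξ y‖ ^ q)
        simp only [Equiv.coe_mulLeft] at this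
        rw [lp.norm_rpow_eq_tsum hq0 ξ]
        exact this
      rw [Finset.sum_congr rfl (fun j _ => hj j), Finset.sum_const, Finset.card_univ,
        Fintype.card_fin, nsmul_eq_mul, ← mul_assoc, inv_mul_cancel₀ hnne, one_mul]
    have hpointwise : ∀ x : G,
        ‖(Tp ξ) x‖ ^ q ≤ F x ^ (2 - q) * ‖(T2 η) x‖ ^ (2 * q - 2) := by
      intro x
      set a : Fin n → ℝ := fun j => ‖ξ ((c j)⁻¹ * x)‖ with hadef
      have ha0 : ∀ j, 0 ≤ a j := fun j => norm_nonneg _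
      have hs1 : (1 : ℝ) ≤ q / (2 - q) := (one_le_div h2q).2 (by linarith)
      have h2' := Real.inner_le_weight_mul_Lp_of_nonneg (Finset.univ : Finset (Fin n))
        (p := q / (2 - q)) hs1 (fun j => (n : ℝ)⁻¹ * a j ^ (q / 2))
        (fun j => a j ^ (1 - q / 2))
        (fun j => mul_nonneg (by positivity) (Real.rpow_nonneg (ha0 j) _))
        (fun j => Real.rpow_nonneg (ha0 j) _)
      have hwf : ∀ j : Fin n, (n : ℝ)⁻¹ * a j ^ (q / 2) * a j ^ (1 - q / 2)
          = (n : ℝ)⁻¹ * a j := by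
        intro j
        rw [mul_assoc, ← Real.rpow_add' (ha0 j) (by norm_num),
          show q / 2 + (1 - q / 2) = 1 by ring, Real.rpow_one]
      have hwfs : ∀ j : Fin n, (n : ℝ)⁻¹ * a j ^ (q / 2) * (a j ^ (1 - q / 2)) ^ (q / (2 - q))
          = (n : ℝ)⁻¹ * a j ^ q := by
        intro j
        rw [← Real.rpow_mul (ha0 j), show (1 - q / 2) * (q / (2 - q)) = q / 2 by
            field_simp,
          mul_assoc, ← Real.rpow_add' (ha0 j) (by positivity),
          show q / 2 + q / 2 = q by ring]
      rw [Finset.sum_congr rfl (fun j _ => hwf j),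
        Finset.sum_congr rfl (fun j _ => hwfs j)] at h2'
      have hsw : ∑ j : Fin n, (n : ℝ)⁻¹ * a j ^ (q / 2) = ‖(T2 η) x‖ := by
        rw [← Finset.mul_sum, ← hB x]
      have hsF : ∑ j : Fin n, (n : ℝ)⁻¹ * a j ^ q = F x := by
        rw [← Finset.mul_sum]
      rw [hsw, hsF] at h2'
      have hinv : (q / (2 - q))⁻¹ = (2 - q) / q := by
        rw [inv_div]
      rw [hinv, show 1 - (2 - q) / q = (2 * q - 2) / q by field_simp; ring] at h2'
      have h1 : ‖(Tp ξ) x‖ ≤ ∑ j : Fin n, (n : ℝ)⁻¹ * a j :=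
        (norm_avg_apply_le Wp hWp c ξ x).trans_eq (Finset.mul_sum _ _ _)
      have h3 := Real.rpow_le_rpow (norm_nonneg _) (h1.trans h2') hq0.le
      rwa [Real.mul_rpow (Real.rpow_nonneg (norm_nonneg _) _) (Real.rpow_nonneg (hF0 x) _),
        ← Real.rpow_mul (norm_nonneg _), ← Real.rpow_mul (hF0 x),
        div_mul_cancel₀ _ hq0.ne', div_mul_cancel₀ _ hq0.ne', mul_comm] at h3
    -- Hölder over x
    have hpq' : ((2 - q)⁻¹).HolderConjugate ((q - 1)⁻¹) := by
      rw [Real.holderConjugate_iff]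
      constructor
      · rw [lt_inv_comm₀ one_pos h2q]
        · simpa using by linarith
      · rw [inv_inv, inv_inv]; ring
    have hf_sum : Summable (fun x : G => (F x ^ (2 - q)) ^ ((2 - q)⁻¹)) := by
      refine Summable.congr hFsum (fun x => ?_)
      rw [Real.rpow_rpow_inv (hF0 x) h2q.ne']
    have hg_sum : Summable (fun x : G => (‖(T2 η) x‖ ^ (2 * q - 2)) ^ ((q - 1)⁻¹)) := by
      refine Summable.congr hsummB2 (fun x => ?_)
      rw [← Real.rpow_mul (norm_nonneg _), show (2 * q - 2) * (q - 1)⁻¹ = 2 by field_simp]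
    have happ := Real.summable_and_inner_le_Lp_mul_Lq_tsum_of_nonneg (f := fun x : G => F x ^ (2 - q))
      (g := fun x : G => ‖(T2 η) x‖ ^ (2 * q - 2)) hpq'
      (fun x => Real.rpow_nonneg (hF0 x) _) (fun x => Real.rpow_nonneg (norm_nonneg _) _)
      hf_sum hg_sum
    have hmain : ‖Tp ξ‖ ^ q ≤ (∑' x : G, F x) ^ (2 - q)
        * (∑' x : G, ‖(T2 η) x‖ ^ (2 : ℝ)) ^ (q - 1) := by
      calc ‖Tp ξ‖ ^ q = ∑' x : G, ‖(Tp ξ) x‖ ^ q := hTpsum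
        _ ≤ ∑' x : G, F x ^ (2 - q) * ‖(T2 η) x‖ ^ (2 * q - 2) :=
            Summable.tsum_le_tsum hpointwise hsummA happ.1
        _ ≤ (∑' x : G, (F x ^ (2 - q)) ^ ((2 - q)⁻¹)) ^ (1 / (2 - q)⁻¹)
            * (∑' x : G, (‖(T2 η) x‖ ^ (2 * q - 2)) ^ ((q - 1)⁻¹)) ^ (1 / (q - 1)⁻¹) := happ.2
        _ = (∑' x : G, F x) ^ (2 - q) * (∑' x : G, ‖(T2 η) x‖ ^ (2 : ℝ)) ^ (q - 1) := by
            rw [one_div, inv_inv, one_div, inv_inv]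
            congr 1
            · congr 1
              refine tsum_congr fun x => ?_
              rw [Real.rpow_rpow_inv (hF0 x) h2q.ne']
            · congr 1
              refine tsum_congr fun x => ?_
              rw [← Real.rpow_mul (norm_nonneg _),
                show (2 * q - 2) * (q - 1)⁻¹ = 2 by field_simp]
    rw [hFts, hT2norm] at hmain
    have hfinal : (‖ξ‖ ^ q) ^ (2 - q) * (‖T2 η‖ ^ (2 : ℝ)) ^ (q - 1)
        ≤ C ^ (2 * m) * ‖ξ‖ ^ q := by
      have hstep : (‖T2 η‖ ^ (2 : ℝ)) ^ (q - 1) ≤ (C ^ (2 : ℝ) * ‖ξ‖ ^ q) ^ (q - 1) :=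
        Real.rpow_le_rpow (Real.rpow_nonneg (norm_nonneg _) _) hT2b hq1'.le
      calc (‖ξ‖ ^ q) ^ (2 - q) * (‖T2 η‖ ^ (2 : ℝ)) ^ (q - 1)
          ≤ (‖ξ‖ ^ q) ^ (2 - q) * (C ^ (2 : ℝ) * ‖ξ‖ ^ q) ^ (q - 1) := by
            exact mul_le_mul_of_nonneg_left hstep (Real.rpow_nonneg
              (Real.rpow_nonneg (norm_nonneg _) _) _)
        _ = C ^ (2 * m) * ‖ξ‖ ^ q := by
            rw [Real.mul_rpow (Real.rpow_nonneg hC0 _) (Real.rpow_nonneg (norm_nonneg _) _),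
              ← Real.rpow_mul hC0, ← mul_assoc,
              mul_comm ((‖ξ‖ ^ q) ^ (2 - q)) (C ^ (2 * (q - 1))), mul_assoc,
              ← Real.rpow_add' (Real.rpow_nonneg (norm_nonneg _) _) (by norm_num),
              show (2 - q) + (q - 1) = 1 by ring, Real.rpow_one, hmeq]
    exact hmain.trans hfinal

end PowersAux2

/-- if the left regular representation on `ℓ²(G)` (i.e. `C*_r(G)`) has the
Powers property, then for every `p ∈ (1,∞)` the left regular representation on `ℓ^p(G)`
has the Powers property. -/
theorem powers_property_transfers_to_lp
    {G : Type*} [Group G]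
    (W : ∀ (p : ℝ≥0∞) [Fact (1 ≤ p)],
      G → (lp (fun _ : G => ℂ) p →L[ℂ] lp (fun _ : G => ℂ) p))
    (hW : ∀ (p : ℝ≥0∞) [Fact (1 ≤ p)],
      ∀ (g : G) (ξ : lp (fun _ : G => ℂ) p) (h : G), (W p g ξ) h = ξ (g⁻¹ * h))
    (hPowers2 : ∀ S : Finset G, (1 : G) ∉ S → ∀ ε : ℝ, 0 < ε →
      ∃ (n : ℕ) (h : Fin n → G), 0 < n ∧ ∀ g ∈ S,
        ‖(n : ℝ)⁻¹ • ∑ j : Fin n, W 2 (h j * g * (h j)⁻¹)‖ < ε) :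
    ∀ (p : ℝ≥0∞) [Fact (1 ≤ p)], 1 < p → p ≠ ⊤ →
      ∀ S : Finset G, (1 : G) ∉ S → ∀ ε : ℝ, 0 < ε →
        ∃ (n : ℕ) (h : Fin n → G), 0 < n ∧ ∀ g ∈ S,
          ‖(n : ℝ)⁻¹ • ∑ j : Fin n, W p (h j * g * (h j)⁻¹)‖ < ε := by
  intro p _instp hp1 hpt S hS ε hε
  have hq1 : 1 < p.toReal := by
    have h := ENNReal.toReal_strict_mono hpt hp1
    simpa using h
  set α : ℝ := 2 * min 1 (p.toReal - 1) / p.toReal with hαdef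
  have hα0 : (0 : ℝ) < α := by
    apply div_pos _ (by linarith)
    have : (0 : ℝ) < min 1 (p.toReal - 1) := lt_min one_pos (by linarith)
    linarith
  have hεmin : (0 : ℝ) < min ε 1 / 2 := by
    have := lt_min hε one_pos
    linarith
  set ε' : ℝ := (min ε 1 / 2) ^ α⁻¹ with hε'def
  have hε'0 : 0 < ε' := Real.rpow_pos_of_pos hεmin _
  obtain ⟨n, h, hn, hb⟩ := hPowers2 S hS ε' hε'0
  refine ⟨n, h, hn, fun g hg => ?_⟩
  have hkey := key_bound hq1 (W p) (hW p) (W 2) (hW 2) hn (fun j => h j * g * (h j)⁻¹)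
  refine lt_of_le_of_lt hkey ?_
  calc ‖(n : ℝ)⁻¹ • ∑ j : Fin n, W 2 (h j * g * (h j)⁻¹)‖ ^ α
      < ε' ^ α := Real.rpow_lt_rpow (norm_nonneg _) (hb g hg) hα0
    _ = min ε 1 / 2 := Real.rpow_inv_rpow hεmin.le hα0.ne'
    _ < ε := by
        have h1 : min ε 1 ≤ ε := min_le_left _ _
        linarith
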